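/- arXiv:2603.10423 — 4 statements merged into one kernel-verified Lean document; each statement's English description precedes it below -/
import Mathlib

section
/- Let T be a positive semi-definite bounded operator on a Hilbert space H and M a closed subspace of H with orthogonal projections P_M and P_{M⊥}. Set C_M = (‖P_M T P_M‖ · ‖P_{M⊥} T P_{M⊥}‖)^{1/2}. Then −C_M·I ≤ T − P_M T P_M − P_{M⊥} T P_{M⊥} ≤ C_M·I in the order of self-adjoint operators. -/
open ContinuousLinearMap
open scoped ComplexInnerProductSpace

-- Cauchy-Schwarz for a positive operator
lemma aux_cs {H : Type*} [NormedAddCommGroup H] [InnerProductSpace ℂ H]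
    [CompleteSpace H] (T : H →L[ℂ] H) (hT : T.IsPositive) (p q : H) :
    abs (Complex.re ⟪T p, q⟫) ≤
      Real.sqrt (Complex.re ⟪T p, p⟫ * Complex.re ⟪T q, q⟫) := by
  have hsym : ∀ u v : H, ⟪T u, v⟫ = ⟪u, T v⟫ :=
    (isSelfAdjoint_iff_isSymmetric.mp hT.isSelfAdjoint)
  have key : ∀ t : ℝ, 0 ≤ (Complex.re ⟪T q, q⟫) * (t * t) +
      (2 * Complex.re ⟪T p, q⟫) * t + Complex.re ⟪T p, p⟫ := by
    intro t
    have h0 := hT.re_inner_nonneg_left (p + (t : ℂ) • q)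
    have hqp : Complex.re ⟪T q, p⟫ = Complex.re ⟪T p, q⟫ := by
      rw [hsym q p]
      exact inner_re_symm (𝕜 := ℂ) _ _
    simp only [map_add, map_smul, inner_add_left, inner_add_right, inner_smul_left,
      inner_smul_right, Complex.conj_ofReal, RCLike.re_to_complex, Complex.add_re,
      Complex.re_ofReal_mul] at h0
    rw [hqp] at h0
    nlinarith [h0]
  have hd := discrim_le_zero key
  rw [discrim] at hd
  have h2 : (Complex.re ⟪T p, q⟫) ^ 2 ≤ Complex.re ⟪T p, p⟫ * Complex.re ⟪T q, q⟫ := by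
    nlinarith [hd]
  calc abs (Complex.re ⟪T p, q⟫) = Real.sqrt ((Complex.re ⟪T p, q⟫) ^ 2) :=
        (Real.sqrt_sq_eq_abs _).symm
    _ ≤ _ := Real.sqrt_le_sqrt h2

lemma aux_bound {H : Type*} [NormedAddCommGroup H] [InnerProductSpace ℂ H]
    [CompleteSpace H] (S : H →L[ℂ] H) (u v : H) :
    Complex.re ⟪S u, v⟫ ≤ ‖S‖ * ‖u‖ * ‖v‖ := by
  calc Complex.re ⟪S u, v⟫ ≤ ‖(⟪S u, v⟫ : ℂ)‖ := by
        simpa using Complex.re_le_norm _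
    _ ≤ ‖S u‖ * ‖v‖ := norm_inner_le_norm _ _
    _ ≤ ‖S‖ * ‖u‖ * ‖v‖ := by
        have := S.le_opNorm u
        have : ‖S u‖ * ‖v‖ ≤ ‖S‖ * ‖u‖ * ‖v‖ :=
          mul_le_mul_of_nonneg_right this (norm_nonneg v)
        linarith


set_option maxHeartbeats 1600000 in
/-- Splitting lemma: for a positive semi-definite bounded operator `T` on a Hilbert space and a
closed subspace `K` with orthogonal projections `P = P_K`, `Q = P_{K⊥}`, setting
`C = (‖PTP‖·‖QTQ‖)^{1/2}`, we have `−C·I ≤ T − PTP − QTQ ≤ C·I`. -/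
theorem stmt0 {H : Type*} [NormedAddCommGroup H] [InnerProductSpace ℂ H]
    [CompleteSpace H] (T : H →L[ℂ] H) (hT : T.IsPositive)
    (K : Submodule ℂ H) [CompleteSpace K] :
    ((Real.sqrt (‖(K.subtypeL.comp (Submodule.orthogonalProjectionOnto K)).comp
          (T.comp (K.subtypeL.comp (Submodule.orthogonalProjectionOnto K)))‖ *
        ‖(Kᗮ.subtypeL.comp (Submodule.orthogonalProjectionOnto Kᗮ)).comp
          (T.comp (Kᗮ.subtypeL.comp (Submodule.orthogonalProjectionOnto Kᗮ)))‖) • (1 : H →L[ℂ] H)) -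
      (T - (K.subtypeL.comp (Submodule.orthogonalProjectionOnto K)).comp
          (T.comp (K.subtypeL.comp (Submodule.orthogonalProjectionOnto K))) -
        (Kᗮ.subtypeL.comp (Submodule.orthogonalProjectionOnto Kᗮ)).comp
          (T.comp (Kᗮ.subtypeL.comp (Submodule.orthogonalProjectionOnto Kᗮ))))).IsPositive ∧
    ((T - (K.subtypeL.comp (Submodule.orthogonalProjectionOnto K)).comp
          (T.comp (K.subtypeL.comp (Submodule.orthogonalProjectionOnto K))) -
        (Kᗮ.subtypeL.comp (Submodule.orthogonalProjectionOnto Kᗮ)).comp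
          (T.comp (Kᗮ.subtypeL.comp (Submodule.orthogonalProjectionOnto Kᗮ)))) +
      (Real.sqrt (‖(K.subtypeL.comp (Submodule.orthogonalProjectionOnto K)).comp
          (T.comp (K.subtypeL.comp (Submodule.orthogonalProjectionOnto K)))‖ *
        ‖(Kᗮ.subtypeL.comp (Submodule.orthogonalProjectionOnto Kᗮ)).comp
          (T.comp (Kᗮ.subtypeL.comp (Submodule.orthogonalProjectionOnto Kᗮ)))‖) • (1 : H →L[ℂ] H))).IsPositive := by
  set P : H →L[ℂ] H := K.subtypeL.comp (Submodule.orthogonalProjectionOnto K) with hPdef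
  set Q : H →L[ℂ] H := Kᗮ.subtypeL.comp (Submodule.orthogonalProjectionOnto Kᗮ) with hQdef
  set A : H →L[ℂ] H := P.comp (T.comp P) with hAdef
  set B : H →L[ℂ] H := Q.comp (T.comp Q) with hBdef
  set C : ℝ := Real.sqrt (‖A‖ * ‖B‖) with hCdef
  have hPsa : IsSelfAdjoint P := by have := isSelfAdjoint_starProjection K; exact this
  have hQsa : IsSelfAdjoint Q := by have := isSelfAdjoint_starProjection Kᗮ; exact this
  have hA : A.IsPositive := by
    have := hT.adjoint_conj P
    rwa [hPsa.adjoint_eq] at this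
  have hB : B.IsPositive := by
    have := hT.adjoint_conj Q
    rwa [hQsa.adjoint_eq] at this
  have hDsa : IsSelfAdjoint (T - A - B) :=
    (hT.isSelfAdjoint.sub hA.isSelfAdjoint).sub hB.isSelfAdjoint
  have hCsa : IsSelfAdjoint (C • (1 : H →L[ℂ] H)) := by
    rw [IsSelfAdjoint, star_smul, star_trivial, star_one]
  -- the key pointwise estimate
  have key : ∀ x : H, abs (Complex.re ⟪(T - A - B) x, x⟫) ≤ C * ‖x‖ ^ 2 := by
    intro x
    set p : H := (Submodule.orthogonalProjectionOnto K x : H) with hp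
    set q : H := (Submodule.orthogonalProjectionOnto Kᗮ x : H) with hq
    have hpq : p + q = x := by
      have := Submodule.starProjection_add_starProjection_orthogonal (K := K) x; exact this
    have hPx : P x = p := by simp [hPdef, hp]
    have hQx : Q x = q := by simp [hQdef, hq]
    have hPp : P p = p := by
      simp [hPdef, hp, Submodule.starProjection_eq_self_iff.mpr (Submodule.starProjection_apply_mem K x)]
    have hQq : Q q = q := by
      exact Submodule.starProjection_eq_self_iff.mpr (Submodule.starProjection_apply_mem Kᗮ x)
    have hPinner : ∀ y : H, ⟪P y, x⟫ = ⟪y, p⟫ := by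
      intro y
      simp only [hPdef, ContinuousLinearMap.comp_apply, Submodule.subtypeL_apply, hp]
      exact Submodule.inner_starProjection_left_eq_right K y x
    have hQinner : ∀ y : H, ⟪Q y, x⟫ = ⟪y, q⟫ := by
      intro y
      simp only [hQdef, ContinuousLinearMap.comp_apply, Submodule.subtypeL_apply, hq]
      exact Submodule.inner_starProjection_left_eq_right Kᗮ y x
    have hAx : ⟪A x, x⟫ = ⟪T p, p⟫ := by
      have : A x = P (T p) := by simp [hAdef, ContinuousLinearMap.comp_apply, hPx]
      rw [this, hPinner]
    have hBx : ⟪B x, x⟫ = ⟪T q, q⟫ := by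
      have : B x = Q (T q) := by simp [hBdef, ContinuousLinearMap.comp_apply, hQx]
      rw [this, hQinner]
    have hqp : Complex.re ⟪T q, p⟫ = Complex.re ⟪T p, q⟫ := by
      rw [(isSelfAdjoint_iff_isSymmetric.mp hT.isSelfAdjoint).apply_clm q p]
      exact inner_re_symm (𝕜 := ℂ) _ _
    have hDx : Complex.re ⟪(T - A - B) x, x⟫ = 2 * Complex.re ⟪T p, q⟫ := by
      have hTx : ⟪T x, x⟫ = ⟪T p, p⟫ + ⟪T p, q⟫ + ⟪T q, p⟫ + ⟪T q, q⟫ := by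
        rw [← hpq]
        simp only [map_add, inner_add_left, inner_add_right]
        ring
      simp only [ContinuousLinearMap.sub_apply, inner_sub_left, hTx, hAx, hBx]
      simp only [Complex.sub_re, Complex.add_re]
      linarith [hqp]
    -- Cauchy-Schwarz and norm bounds
    have hcs := aux_cs T hT p q
    have hPsym := isSelfAdjoint_iff_isSymmetric.mp hPsa
    have hQsym := isSelfAdjoint_iff_isSymmetric.mp hQsa
    have hTpp : Complex.re ⟪T p, p⟫ ≤ ‖A‖ * ‖p‖ ^ 2 := by
      have h1 : ⟪A p, p⟫ = ⟪T p, p⟫ := by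
        have hap : A p = P (T p) := by simp [hAdef, ContinuousLinearMap.comp_apply, hPp]
        rw [hap]
        have := hPsym (T p) p
        simpa [hPp] using this
      calc Complex.re ⟪T p, p⟫ = Complex.re ⟪A p, p⟫ := by rw [h1]
        _ ≤ ‖A‖ * ‖p‖ * ‖p‖ := aux_bound A p p
        _ = ‖A‖ * ‖p‖ ^ 2 := by ring
    have hTqq : Complex.re ⟪T q, q⟫ ≤ ‖B‖ * ‖q‖ ^ 2 := by
      have h1 : ⟪B q, q⟫ = ⟪T q, q⟫ := by
        have hbq : B q = Q (T q) := by simp [hBdef, ContinuousLinearMap.comp_apply, hQq]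
        rw [hbq]
        have := hQsym (T q) q
        simpa [hQq] using this
      calc Complex.re ⟪T q, q⟫ = Complex.re ⟪B q, q⟫ := by rw [h1]
        _ ≤ ‖B‖ * ‖q‖ * ‖q‖ := aux_bound B q q
        _ = ‖B‖ * ‖q‖ ^ 2 := by ring
    have ha : 0 ≤ Complex.re ⟪T p, p⟫ := hT.re_inner_nonneg_left p
    have hb : 0 ≤ Complex.re ⟪T q, q⟫ := hT.re_inner_nonneg_left q
    have hC0 : 0 ≤ C := Real.sqrt_nonneg _
    have hs2 : C ^ 2 = ‖A‖ * ‖B‖ := Real.sq_sqrt (by positivity)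
    have hnormx : ‖x‖ ^ 2 = ‖p‖ ^ 2 + ‖q‖ ^ 2 := by
      have horth : ⟪p, q⟫ = 0 :=
        Submodule.inner_right_of_mem_orthogonal (SetLike.coe_mem _) (SetLike.coe_mem _)
      rw [← hpq, @norm_add_sq ℂ]
      simp [horth]
    have h2 : Real.sqrt (Complex.re ⟪T p, p⟫ * Complex.re ⟪T q, q⟫) ≤ C * (‖p‖ * ‖q‖) := by
      have hle : Complex.re ⟪T p, p⟫ * Complex.re ⟪T q, q⟫ ≤ (C * (‖p‖ * ‖q‖)) ^ 2 := by
        have hBnn : (0:ℝ) ≤ ‖B‖ := norm_nonneg _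
        have hAnn : (0:ℝ) ≤ ‖A‖ := norm_nonneg _
        nlinarith [hTpp, hTqq, ha, hb, norm_nonneg p, norm_nonneg q, hs2,
          sq_nonneg (‖p‖ * ‖q‖)]
      calc Real.sqrt (Complex.re ⟪T p, p⟫ * Complex.re ⟪T q, q⟫)
          ≤ Real.sqrt ((C * (‖p‖ * ‖q‖)) ^ 2) := Real.sqrt_le_sqrt hle
        _ = C * (‖p‖ * ‖q‖) := Real.sqrt_sq (by positivity)
    rw [hDx]
    have habs := (abs_le.mp (hcs.trans h2))
    rw [abs_le]
    constructor <;> nlinarith [habs.1, habs.2, sq_nonneg (‖p‖ - ‖q‖), hC0, hnormx]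
  have happly : ∀ x : H, Complex.re ⟪(C • (1 : H →L[ℂ] H)) x, x⟫ = C * ‖x‖ ^ 2 := by
    intro x
    have : (C • (1 : H →L[ℂ] H)) x = (C : ℂ) • x := by
      simp [Complex.real_smul]
    have hxx : Complex.re ⟪x, x⟫ = ‖x‖ ^ 2 := inner_self_eq_norm_sq (𝕜 := ℂ) x
    rw [this, inner_smul_left, Complex.conj_ofReal, Complex.re_ofReal_mul, hxx]
  constructor
  · refine ⟨isSelfAdjoint_iff_isSymmetric.mp (hCsa.sub hDsa), fun x => ?_⟩
    have hk := abs_le.mp (key x)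
    rw [ContinuousLinearMap.reApplyInnerSelf_apply,
      ContinuousLinearMap.sub_apply (C • 1) (T - A - B), inner_sub_left, map_sub]
    simp only [RCLike.re_to_complex]
    rw [happly x]
    linarith [hk.2]
  · refine ⟨isSelfAdjoint_iff_isSymmetric.mp (hDsa.add hCsa), fun x => ?_⟩
    have hk := abs_le.mp (key x)
    rw [ContinuousLinearMap.reApplyInnerSelf_apply,
      ContinuousLinearMap.add_apply (T - A - B) (C • 1), inner_add_left, map_add]
    simp only [RCLike.re_to_complex]
    rw [happly x]
    linarith [hk.1]
end

section
/- Let Ψ : X → H be a continuous frame with frame bounds A and B, and let {x_n}_{n∈ℕ} ⊆ X and c > 0 be such that the operator norm inequality ‖S_Ψ − c·∑_{n} T_{Ψ(x_n)}‖ < ε holds, where ε < A. Then {Ψ(x_n)}_{n∈ℕ} is a frame for H with frame bounds c^{-1}(A − ε) and c^{-1}(B + ε); equivalently, for every f ∈ H, c^{-1}(A−ε)‖f‖² ≤ ∑_n |⟨f, Ψ(x_n)⟩|² ≤ c^{-1}(B+ε)‖f‖². -/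
open MeasureTheory ContinuousLinearMap
open scoped ComplexInnerProductSpace

lemma aux_mul_conj (z : ℂ) : z * (starRingEnd ℂ) z = ((‖z‖^2 : ℝ) : ℂ) := by
  simp [Complex.mul_conj, Complex.normSq_eq_norm_sq]

lemma aux_conj_mul (z : ℂ) : (starRingEnd ℂ) z * z = ((‖(starRingEnd ℂ) z‖^2 : ℝ) : ℂ) := by
  rw [RCLike.norm_conj, mul_comm, aux_mul_conj]

lemma aux_mul_conj' (z : ℂ) : z * (starRingEnd ℂ) z = ((‖(starRingEnd ℂ) z‖^2 : ℝ) : ℂ) := by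
  rw [RCLike.norm_conj, aux_mul_conj]

lemma aux_inner_sq {H : Type*} [NormedAddCommGroup H] [InnerProductSpace ℂ H] (f v : H) :
    (⟪f, (⟪v, f⟫ : ℂ) • v⟫ : ℂ) = ((‖(⟪v, f⟫ : ℂ)‖ ^ 2 : ℝ) : ℂ) := by
  rw [inner_smul_right, ← inner_conj_symm v f, aux_conj_mul]

/-- If `Ψ` is a continuous frame with bounds `A ≤ B`, and `{x_n}`, `c > 0` satisfy
`‖S_Ψ − c ∑ T_{Ψ(x_n)}‖ < ε < A`, then `{Ψ(x_n)}` is a frame with bounds `c⁻¹(A−ε)` and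
`c⁻¹(B+ε)`. -/
theorem stmt4 {H X : Type*} [NormedAddCommGroup H] [InnerProductSpace ℂ H] [CompleteSpace H]
    [MeasurableSpace X] (μ : Measure X) (Ψ : X → H) (A B : ℝ) (hA : 0 < A)
    (hframe : ∀ f : H, A * ‖f‖ ^ 2 ≤ (∫ t, ‖⟪Ψ t, f⟫‖ ^ 2 ∂μ) ∧
      (∫ t, ‖⟪Ψ t, f⟫‖ ^ 2 ∂μ) ≤ B * ‖f‖ ^ 2)
    (S : H →L[ℂ] H)
    (hS : ∀ f g : H, ⟪g, S f⟫ = ∫ t, ⟪g, Ψ t⟫ * ⟪Ψ t, f⟫ ∂μ)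
    (x : ℕ → X) (c : ℝ) (hc : 0 < c)
    (Q : H →L[ℂ] H)
    (hQ : ∀ f : H, HasSum (fun n => ⟪Ψ (x n), f⟫ • Ψ (x n)) (Q f))
    (ε : ℝ) (hε : ε < A) (hnorm : ‖S - c • Q‖ < ε) :
    ∀ f : H,
      c⁻¹ * (A - ε) * ‖f‖ ^ 2 ≤ (∑' n, ‖⟪Ψ (x n), f⟫‖ ^ 2) ∧
      (∑' n, ‖⟪Ψ (x n), f⟫‖ ^ 2) ≤ c⁻¹ * (B + ε) * ‖f‖ ^ 2 := by
  intro f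
  -- the complex-valued sum
  have h1 : HasSum (fun n => (((‖⟪Ψ (x n), f⟫‖ ^ 2 : ℝ)) : ℂ)) ⟪f, Q f⟫ := by
    have h0 := (hQ f).mapL (innerSL ℂ f)
    have he : (fun n => (innerSL ℂ f) (⟪Ψ (x n), f⟫ • Ψ (x n)))
        = fun n => (((‖⟪Ψ (x n), f⟫‖ ^ 2 : ℝ)) : ℂ) := by
      funext n
      rw [innerSL_apply_apply, aux_inner_sq]
    rwa [he, innerSL_apply_apply] at h0
  -- the real-valued sum
  have h2 : HasSum (fun n => (‖⟪Ψ (x n), f⟫‖ ^ 2 : ℝ)) (⟪f, Q f⟫.re) := by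
    have := h1.mapL Complex.reCLM
    simpa [← Complex.ofReal_pow] using this
  have hT : (∑' n, ‖⟪Ψ (x n), f⟫‖ ^ 2) = ⟪f, Q f⟫.re := h2.tsum_eq
  set T : ℝ := ⟪f, Q f⟫.re with hTdef
  have hQf : ⟪f, Q f⟫ = (T : ℂ) := by
    have h3 : HasSum (fun n => (((‖⟪Ψ (x n), f⟫‖ ^ 2 : ℝ)) : ℂ)) ((T : ℝ) : ℂ) := by
      have := h2.mapL Complex.ofRealCLM
      simpa using this
    exact h1.unique h3
  set I : ℝ := ∫ t, ‖⟪Ψ t, f⟫‖ ^ 2 ∂μ with hIdef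
  have hSf : ⟪f, S f⟫ = (I : ℂ) := by
    rw [hS]
    have : (∫ t, ⟪f, Ψ t⟫ * ⟪Ψ t, f⟫ ∂μ)
        = ∫ t, (((‖⟪Ψ t, f⟫‖ ^ 2 : ℝ)) : ℂ) ∂μ := by
      congr 1
      funext t
      rw [← inner_conj_symm (Ψ t) f, aux_mul_conj']
    rw [this, hIdef]
    exact integral_ofReal
  have key : ⟪f, (S - c • Q) f⟫ = ((I - c * T : ℝ) : ℂ) := by
    rw [sub_apply, inner_sub_right, smul_apply, RCLike.real_smul_eq_coe_smul (K := ℂ),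
      inner_smul_right, hSf, hQf]
    push_cast
    rfl
  have hb : ‖⟪f, (S - c • Q) f⟫‖ ≤ ε * ‖f‖ ^ 2 := by
    calc ‖⟪f, (S - c • Q) f⟫‖ ≤ ‖f‖ * ‖(S - c • Q) f‖ := norm_inner_le_norm _ _
      _ ≤ ‖f‖ * (‖S - c • Q‖ * ‖f‖) := by gcongr; exact le_opNorm _ _
      _ ≤ ε * ‖f‖ ^ 2 := by nlinarith [norm_nonneg f, norm_nonneg (S - c • Q)]
  rw [key, Complex.norm_real, Real.norm_eq_abs] at hb
  obtain ⟨h5, h6⟩ := abs_le.mp hb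
  obtain ⟨hlo, hhi⟩ := hframe f
  rw [← hIdef] at hlo hhi
  rw [hT]
  have hcinv : (0:ℝ) < c⁻¹ := by positivity
  constructor
  · have h4 : (A - ε) * ‖f‖ ^ 2 ≤ c * T := by nlinarith
    calc c⁻¹ * (A - ε) * ‖f‖ ^ 2 = c⁻¹ * ((A - ε) * ‖f‖ ^ 2) := by ring
      _ ≤ c⁻¹ * (c * T) := by exact mul_le_mul_of_nonneg_left h4 hcinv.le
      _ = T := by field_simp
  · have h4 : c * T ≤ (B + ε) * ‖f‖ ^ 2 := by nlinarith
    calc T = c⁻¹ * (c * T) := by field_simp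
      _ ≤ c⁻¹ * ((B + ε) * ‖f‖ ^ 2) := mul_le_mul_of_nonneg_left h4 hcinv.le
      _ = c⁻¹ * (B + ε) * ‖f‖ ^ 2 := by ring
end

section
/- Let μ be a non-atomic measure on X and E ⊆ X a measurable set with μ(E) < ∞. Then there exist natural numbers ℓ_1, ℓ_2, … and pairwise disjoint measurable subsets E_k ⊆ E such that μ(E_k) = 2^{-ℓ_k} for all k and ∑_k 2^{-ℓ_k} = μ(E). -/
open MeasureTheory
open scoped ENNReal

section Aux

variable {X : Type*} [MeasurableSpace X] (μ : Measure X)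

open MeasureTheory
open scoped ENNReal

variable {X : Type*} [MeasurableSpace X] (μ : Measure X)

lemma halve_aux
    (hNA : ∀ A : Set X, MeasurableSet A → 0 < μ A →
      ∃ B ⊆ A, MeasurableSet B ∧ 0 < μ B ∧ μ B < μ A)
    (A : Set X) (hA : MeasurableSet A) (hap : 0 < μ A) (haf : μ A < ∞) :
    ∃ B ⊆ A, MeasurableSet B ∧ 0 < μ B ∧ μ B ≤ μ A / 2 := by
  obtain ⟨B, hBA, hBm, hBpos, hBlt⟩ := hNA A hA hap
  by_cases h : μ B ≤ μ A / 2
  · exact ⟨B, hBA, hBm, hBpos, h⟩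
  · have hd : μ (A \ B) = μ A - μ B :=
      measure_diff hBA hBm.nullMeasurableSet (hBlt.trans haf).ne
    refine ⟨A \ B, Set.diff_subset, hA.diff hBm, ?_, ?_⟩
    · rw [hd]; exact tsub_pos_of_lt hBlt
    · rw [hd]
      calc μ A - μ B ≤ μ A - μ A / 2 := tsub_le_tsub_left (le_of_not_ge h) _
      _ = μ A / 2 := ENNReal.sub_half haf.ne


lemma small_aux
    (hNA : ∀ A : Set X, MeasurableSet A → 0 < μ A →
      ∃ B ⊆ A, MeasurableSet B ∧ 0 < μ B ∧ μ B < μ A)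
    (A : Set X) (hA : MeasurableSet A) (hap : 0 < μ A) (haf : μ A < ∞)
    (ε : ℝ≥0∞) (hε : 0 < ε) :
    ∃ B ⊆ A, MeasurableSet B ∧ 0 < μ B ∧ μ B ≤ ε := by
  have key : ∀ n : ℕ, ∃ B ⊆ A, MeasurableSet B ∧ 0 < μ B ∧ μ B ≤ μ A * (2 : ℝ≥0∞)⁻¹ ^ n := by
    intro n; induction n with
    | zero => exact ⟨A, subset_rfl, hA, hap, by simp⟩
    | succ n ih =>
      obtain ⟨B, hBA, hBm, hBpos, hBle⟩ := ih
      have hBf : μ B < ∞ := lt_of_le_of_lt hBle (by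
        exact ENNReal.mul_lt_top haf (ENNReal.pow_lt_top (by simp)))
      obtain ⟨C, hCB, hCm, hCpos, hCle⟩ := halve_aux μ hNA B hBm hBpos hBf
      refine ⟨C, hCB.trans hBA, hCm, hCpos, ?_⟩
      calc μ C ≤ μ B / 2 := hCle
        _ ≤ (μ A * (2:ℝ≥0∞)⁻¹ ^ n) / 2 := by gcongr
        _ = μ A * (2:ℝ≥0∞)⁻¹ ^ (n+1) := by
            rw [pow_succ, div_eq_mul_inv, mul_assoc]
  -- choose n with μ A * 2⁻¹ ^ n ≤ ε
  have h1 : (0:ℝ≥0∞) < ε / (μ A + 1) := by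
    apply ENNReal.div_pos hε.ne'
    exact (ENNReal.add_lt_top.2 ⟨haf, ENNReal.one_lt_top⟩).ne
  obtain ⟨n, hn⟩ := ENNReal.exists_inv_two_pow_lt h1.ne'
  obtain ⟨B, hBA, hBm, hBpos, hBle⟩ := key n
  refine ⟨B, hBA, hBm, hBpos, hBle.trans ?_⟩
  calc μ A * (2:ℝ≥0∞)⁻¹ ^ n ≤ (μ A + 1) * (ε / (μ A + 1)) := mul_le_mul' le_self_add hn.le
    _ = ε := by
        rw [ENNReal.mul_div_cancel (by simp) (ENNReal.add_lt_top.2 ⟨haf, ENNReal.one_lt_top⟩).ne]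


lemma sier_aux
    (hNA : ∀ A : Set X, MeasurableSet A → 0 < μ A →
      ∃ B ⊆ A, MeasurableSet B ∧ 0 < μ B ∧ μ B < μ A)
    (A : Set X) (hA : MeasurableSet A) (haf : μ A < ∞) (r : ℝ≥0∞) (hr : r ≤ μ A) :
    ∃ B ⊆ A, MeasurableSet B ∧ μ B = r := by
  classical
  set Cand : Set X → Prop := fun C => C ⊆ A ∧ MeasurableSet C ∧ μ C ≤ r with hCandDef
  have hrf : r < ∞ := lt_of_le_of_lt hr haf
  have step : ∀ C, Cand C → ∀ n : ℕ, ∃ C', Cand C' ∧ C ⊆ C' ∧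
      ∀ B, Cand B → C ⊆ B → μ B ≤ μ C' + ((n : ℝ≥0∞) + 1)⁻¹ := by
    intro C hC n
    set δ : ℝ≥0∞ := ((n : ℝ≥0∞) + 1)⁻¹ with hδdef
    have hδpos : 0 < δ := ENNReal.inv_pos.2 (by simp)
    have hδtop : δ ≠ ∞ := by
      simp [hδdef]
    set S : Set ℝ≥0∞ := (fun B => μ B) '' {B | Cand B ∧ C ⊆ B} with hS
    have hsle : sSup S ≤ r := by
      apply sSup_le
      rintro x ⟨B, ⟨⟨_, _, hB⟩, _⟩, rfl⟩
      exact hB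
    by_cases hcase : sSup S ≤ δ
    · refine ⟨C, hC, subset_rfl, fun B hB hCB => ?_⟩
      have hmem : μ B ∈ S := ⟨B, ⟨hB, hCB⟩, rfl⟩
      exact le_trans (le_sSup hmem) (hcase.trans le_add_self)
    · push_neg at hcase
      have hs0 : sSup S ≠ 0 := by
        intro h; rw [h] at hcase; exact absurd hcase (not_lt.2 (zero_le : 0 ≤ δ))
      have hstop : sSup S ≠ ∞ := (lt_of_le_of_lt hsle hrf).ne
      have hlt : sSup S - δ < sSup S := ENNReal.sub_lt_self hstop hs0 hδpos.ne'
      obtain ⟨x, hxS, hx⟩ := lt_sSup_iff.1 hlt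
      obtain ⟨B0, ⟨hB0c, hB0s⟩, rfl⟩ := hxS
      refine ⟨B0, hB0c, hB0s, fun B hB hCB => ?_⟩
      have h1 : sSup S < μ B0 + δ := (ENNReal.sub_lt_iff_lt_right hδtop hcase.le).1 hx
      have hmem : μ B ∈ S := ⟨B, ⟨hB, hCB⟩, rfl⟩
      exact (le_sSup hmem).trans h1.le
  choose stepC h1 h2 h3 using step
  have hCand0 : Cand ∅ := ⟨Set.empty_subset _, MeasurableSet.empty, by simp⟩
  let D : ℕ → {C : Set X // Cand C} := fun n =>
    Nat.rec ⟨∅, hCand0⟩ (fun n p => ⟨stepC p.1 p.2 n, h1 p.1 p.2 n⟩) n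
  have hDsucc : ∀ n, (D (n + 1)).1 = stepC (D n).1 (D n).2 n := fun n => rfl
  have hmono : Monotone fun n => (D n).1 := by
    apply monotone_nat_of_le_succ
    intro n
    rw [hDsucc n]
    exact h2 (D n).1 (D n).2 n
  set Cinf : Set X := ⋃ n, (D n).1 with hCinfDef
  have hCsub : Cinf ⊆ A := Set.iUnion_subset fun n => (D n).2.1
  have hCm : MeasurableSet Cinf := MeasurableSet.iUnion fun n => (D n).2.2.1
  have hCmeas : μ Cinf = ⨆ n, μ (D n).1 :=
    Directed.measure_iUnion (hmono.directed_le)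
  have hCle : μ Cinf ≤ r := by
    rw [hCmeas]; exact iSup_le fun n => (D n).2.2.2
  refine ⟨Cinf, hCsub, hCm, ?_⟩
  by_contra hne
  have hClt : μ Cinf < r := lt_of_le_of_ne hCle hne
  have hCfin : μ Cinf < ∞ := hClt.trans hrf
  have hdiffpos : 0 < μ (A \ Cinf) := by
    rw [measure_diff hCsub hCm.nullMeasurableSet hCfin.ne]
    exact tsub_pos_of_lt (lt_of_lt_of_le hClt hr)
  obtain ⟨Dset, hDsub, hDm, hDpos, hDle⟩ := small_aux μ hNA (A \ Cinf) (hA.diff hCm)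
    hdiffpos (lt_of_le_of_lt (measure_mono Set.diff_subset) haf) (r - μ Cinf)
    (tsub_pos_of_lt hClt)
  set d : ℝ≥0∞ := μ Dset with hd
  have hdfin : d < ∞ := lt_of_le_of_lt hDle (lt_of_le_of_lt tsub_le_self hrf)
  have hdisj : ∀ n, Disjoint ((D n).1) Dset := fun n =>
    (Set.disjoint_sdiff_right).mono (Set.subset_iUnion (fun n => (D n).1) n) hDsub
  have hkey : ∀ n : ℕ, μ (D n).1 + d ≤ μ Cinf + ((n : ℝ≥0∞) + 1)⁻¹ := by
    intro n
    have hBn : Cand ((D n).1 ∪ Dset) := by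
      refine ⟨Set.union_subset (D n).2.1 (hDsub.trans Set.diff_subset), (D n).2.2.1.union hDm, ?_⟩
      calc μ ((D n).1 ∪ Dset) ≤ μ (D n).1 + d := measure_union_le _ _
        _ ≤ μ Cinf + (r - μ Cinf) := by
            gcongr
            exact Set.subset_iUnion (fun n => (D n).1) n
        _ = r := add_tsub_cancel_of_le hClt.le
    have := h3 (D n).1 (D n).2 n ((D n).1 ∪ Dset) hBn Set.subset_union_left
    rw [measure_union (hdisj n) hDm] at this
    refine this.trans ?_
    gcongr
    rw [← hDsucc n]
    exact Set.subset_iUnion (fun k => (D k).1) (n + 1)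
  -- derive contradiction
  have hd2pos : (0 : ℝ≥0∞) < d / 2 := ENNReal.half_pos hDpos.ne'
  obtain ⟨n0, hn0⟩ := ENNReal.exists_inv_nat_lt hd2pos.ne'
  have hall : ∀ m : ℕ, μ (D m).1 + d / 2 ≤ μ Cinf := by
    intro m
    set n := max m n0 with hndef
    have hnn : ((n : ℝ≥0∞) + 1)⁻¹ ≤ d / 2 := by
      refine le_trans ?_ hn0.le
      apply ENNReal.inv_le_inv.2
      calc ((n0 : ℝ≥0∞)) ≤ (n : ℝ≥0∞) := by exact_mod_cast Nat.cast_le.2 (le_max_right m n0)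
        _ ≤ (n : ℝ≥0∞) + 1 := le_self_add
    have h4 : μ (D m).1 + d ≤ μ Cinf + d / 2 :=
      le_trans (by gcongr; exact hmono (le_max_left m n0))
        ((hkey n).trans (by gcongr))
    have h5 : μ (D m).1 + d / 2 + d / 2 ≤ μ Cinf + d / 2 := by
      rwa [add_assoc, ENNReal.add_halves]
    exact (ENNReal.add_le_add_iff_right (by
      exact (lt_of_le_of_lt (ENNReal.half_le_self) hdfin).ne)).1 h5
  have h6 : μ Cinf + d / 2 ≤ μ Cinf := by
    calc μ Cinf + d / 2 = ⨆ n, (μ (D n).1 + d / 2) := by rw [hCmeas, ENNReal.iSup_add]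
      _ ≤ μ Cinf := iSup_le hall
  have : d / 2 ≤ 0 := by
    have h7 : μ Cinf + d / 2 ≤ μ Cinf + 0 := by simpa using h6
    exact (ENNReal.add_le_add_iff_left hCfin.ne).1 h7
  exact absurd this (by simpa using hd2pos.ne')


end Aux

/-- For a non-atomic measure `μ` and a measurable set `E` with `0 < μ(E) < ∞`, there are
naturals `ℓ_k` and pairwise disjoint measurable subsets `E_k ⊆ E` with `μ(E_k) = 2^{-ℓ_k}`
and `∑_k 2^{-ℓ_k} = μ(E)`. -/
theorem stmt15 {X : Type*} [MeasurableSpace X] (μ : Measure X)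
    (hNA : ∀ A : Set X, MeasurableSet A → 0 < μ A →
      ∃ B ⊆ A, MeasurableSet B ∧ 0 < μ B ∧ μ B < μ A)
    (E : Set X) (hE : MeasurableSet E) (hpos : 0 < μ E) (hfin : μ E < ∞) :
    ∃ (ℓ : ℕ → ℕ) (F : ℕ → Set X),
      (∀ k, MeasurableSet (F k)) ∧ (∀ k, F k ⊆ E) ∧
      Pairwise (Function.onFun Disjoint F) ∧
      (∀ k, μ (F k) = ((2 : ℝ≥0∞) ^ ℓ k)⁻¹) ∧
      (∑' k, ((2 : ℝ≥0∞) ^ ℓ k)⁻¹) = μ E := by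
  have key : ∀ R : Set X, R ⊆ E → MeasurableSet R → 0 < μ R → ∃ (l : ℕ) (F : Set X),
      F ⊆ R ∧ MeasurableSet F ∧ μ F = ((2 : ℝ≥0∞) ^ l)⁻¹ ∧
      ((2 : ℝ≥0∞) ^ l)⁻¹ ≤ μ R / 2 ∧ min 1 (μ R / 4) ≤ ((2 : ℝ≥0∞) ^ l)⁻¹ := by
    intro R hRE hRm hRpos

    have hRfin : μ R < ∞ := lt_of_le_of_lt (measure_mono hRE) hfin
    have hex : ∃ n : ℕ, ((2 : ℝ≥0∞) ^ n)⁻¹ ≤ μ R / 2 := by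
      obtain ⟨n, hn⟩ := ENNReal.exists_inv_two_pow_lt (ENNReal.half_pos hRpos.ne').ne'
      exact ⟨n, by rw [ENNReal.inv_pow]; exact hn.le⟩
    set l := Nat.find hex with hldef
    have hl : ((2 : ℝ≥0∞) ^ l)⁻¹ ≤ μ R / 2 := Nat.find_spec hex
    have hlow : min 1 (μ R / 4) ≤ ((2 : ℝ≥0∞) ^ l)⁻¹ := by
      rcases Nat.eq_zero_or_pos l with h0 | hposl
      · rw [h0]; simpa using min_le_left 1 (μ R / 4)
      · have hmin := Nat.find_min hex (show l - 1 < l from Nat.sub_lt hposl one_pos)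
        push_neg at hmin
        have heq : (2 : ℝ≥0∞) * ((2 : ℝ≥0∞) ^ l)⁻¹ = ((2 : ℝ≥0∞) ^ (l - 1))⁻¹ := by
          have hlm : l = (l - 1) + 1 := (Nat.succ_pred_eq_of_pos hposl).symm
          rw [hlm]
          rw [pow_succ, mul_comm ((2:ℝ≥0∞) ^ (l-1)) 2,
            ENNReal.mul_inv (Or.inl two_ne_zero) (Or.inl ENNReal.ofNat_ne_top),
            ← mul_assoc, ENNReal.mul_inv_cancel two_ne_zero ENNReal.ofNat_ne_top, one_mul]
          simp [Nat.succ_pred_eq_of_pos hposl]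
        have h2 : μ R / 2 < 2 * ((2 : ℝ≥0∞) ^ l)⁻¹ := by rw [heq]; exact hmin
        have h3 : μ R / 4 ≤ ((2 : ℝ≥0∞) ^ l)⁻¹ := by
          have hq : μ R / 4 = μ R / 2 / 2 := by
            rw [div_eq_mul_inv, div_eq_mul_inv, div_eq_mul_inv, mul_assoc,
              ← ENNReal.mul_inv (Or.inl two_ne_zero) (Or.inl ENNReal.ofNat_ne_top)]
            norm_num
          rw [hq]
          calc μ R / 2 / 2 ≤ (2 * ((2 : ℝ≥0∞) ^ l)⁻¹) / 2 := ENNReal.div_le_div_right h2.le 2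
            _ = ((2 : ℝ≥0∞) ^ l)⁻¹ := by
              rw [mul_comm, mul_div_assoc, ENNReal.div_self two_ne_zero ENNReal.ofNat_ne_top,
                mul_one]
        exact (min_le_right _ _).trans h3
    have hle : ((2 : ℝ≥0∞) ^ l)⁻¹ ≤ μ R := hl.trans ENNReal.half_le_self
    obtain ⟨F, hFs, hFm, hFv⟩ := sier_aux μ hNA R hRm hRfin (((2 : ℝ≥0∞) ^ l)⁻¹) hle
    exact ⟨l, F, hFs, hFm, hFv, hl, hlow⟩
  classical
  choose lf Ff hFsub hFmeas hFval hFhalf hFlow using key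
  let S := {R : Set X // R ⊆ E ∧ MeasurableSet R ∧ 0 < μ R}
  have hstep : ∀ s : S, s.1 \ Ff s.1 s.2.1 s.2.2.1 s.2.2.2 ⊆ E ∧
      MeasurableSet (s.1 \ Ff s.1 s.2.1 s.2.2.1 s.2.2.2) ∧
      0 < μ (s.1 \ Ff s.1 s.2.1 s.2.2.1 s.2.2.2) := by
    rintro ⟨R, hRE, hRm, hRpos⟩
    dsimp only
    have hRfin : μ R < ∞ := lt_of_le_of_lt (measure_mono hRE) hfin
    have hfv := hFval R hRE hRm hRpos
    have hfh := hFhalf R hRE hRm hRpos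
    have hhalf_fin : μ R / 2 < ∞ := lt_of_le_of_lt ENNReal.half_le_self hRfin
    have hFfin : μ (Ff R hRE hRm hRpos) ≠ ∞ := by
      rw [hfv]; exact (lt_of_le_of_lt hfh hhalf_fin).ne
    refine ⟨Set.diff_subset.trans hRE, hRm.diff (hFmeas R hRE hRm hRpos), ?_⟩
    rw [measure_diff (hFsub R hRE hRm hRpos) (hFmeas R hRE hRm hRpos).nullMeasurableSet hFfin,
      hfv]
    exact tsub_pos_of_lt (lt_of_le_of_lt hfh (ENNReal.half_lt_self hRpos.ne' hRfin.ne))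
  let f : S → S := fun s => ⟨s.1 \ Ff s.1 s.2.1 s.2.2.1 s.2.2.2, hstep s⟩
  let Rs : ℕ → S := fun k => f^[k] ⟨E, subset_rfl, hE, hpos⟩
  have hRsucc : ∀ k, Rs (k + 1) = f (Rs k) := fun k => Function.iterate_succ_apply' f k _
  set ℓ : ℕ → ℕ := fun k => lf (Rs k).1 (Rs k).2.1 (Rs k).2.2.1 (Rs k).2.2.2 with hℓdef
  set F : ℕ → Set X := fun k => Ff (Rs k).1 (Rs k).2.1 (Rs k).2.2.1 (Rs k).2.2.2 with hFdef
  set t : ℕ → ℝ≥0∞ := fun k => ((2 : ℝ≥0∞) ^ ℓ k)⁻¹ with htdef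
  have hFR : ∀ k, F k ⊆ (Rs k).1 := fun k => hFsub _ _ _ _
  have hFm : ∀ k, MeasurableSet (F k) := fun k => hFmeas _ _ _ _
  have hFv : ∀ k, μ (F k) = t k := fun k => hFval _ _ _ _
  have hFh : ∀ k, t k ≤ μ (Rs k).1 / 2 := fun k => hFhalf _ _ _ _
  have hFl : ∀ k, min 1 (μ (Rs k).1 / 4) ≤ t k := fun k => hFlow _ _ _ _
  have hdiff : ∀ k, (Rs (k + 1)).1 = (Rs k).1 \ F k := fun k =>
    congrArg Subtype.val (hRsucc k)
  have hant : Antitone fun k => (Rs k).1 := by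
    apply antitone_nat_of_succ_le
    intro k
    rw [hdiff k]
    exact Set.diff_subset
  have hRE' : ∀ k, (Rs k).1 ⊆ E := fun k => (Rs k).2.1
  have hRfin : ∀ k, μ (Rs k).1 < ∞ := fun k =>
    lt_of_le_of_lt (measure_mono (hRE' k)) hfin
  have htle : ∀ k, t k ≤ μ (Rs k).1 := fun k => (hFh k).trans ENNReal.half_le_self
  have htfin : ∀ k, t k ≠ ∞ := fun k => (lt_of_le_of_lt (htle k) (hRfin k)).ne
  have hrec : ∀ k, μ (Rs (k + 1)).1 = μ (Rs k).1 - t k := by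
    intro k
    rw [hdiff k, measure_diff (hFR k) (hFm k).nullMeasurableSet (by rw [hFv k]; exact htfin k),
      hFv k]
  have hpartial : ∀ n, μ (Rs n).1 + ∑ i ∈ Finset.range n, t i = μ E := by
    intro n; induction n with
    | zero => simp [Rs]
    | succ n ih =>
      rw [Finset.sum_range_succ, hrec n, ← add_assoc, add_right_comm,
        tsub_add_cancel_of_le (htle n)]
      exact ih
  -- disjointness
  have hdisj : Pairwise (Function.onFun Disjoint F) := by
    have haux : ∀ i j, i < j → Disjoint (F i) (F j) := by
      intro i j hij
      have h1 : F j ⊆ (Rs (i + 1)).1 := (hFR j).trans (hant hij)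
      rw [hdiff i] at h1
      exact (Set.disjoint_sdiff_left.mono_left h1).symm
    intro i j hne
    rcases hne.lt_or_gt with h | h
    · exact haux i j h
    · exact (haux j i h).symm
  -- infimum of remainders is zero
  have hinf : (⨅ k, μ (Rs k).1) = 0 := by
    by_contra hL
    set L : ℝ≥0∞ := ⨅ k, μ (Rs k).1 with hLdef
    have hLpos : 0 < L := pos_iff_ne_zero.2 hL
    set c : ℝ≥0∞ := min 1 (L / 4) with hcdef
    have hcpos : 0 < c := lt_min one_pos (ENNReal.div_pos hLpos.ne' (by simp))
    have hcfin : c ≠ ∞ := (lt_of_le_of_lt (min_le_left _ _) ENNReal.one_lt_top).ne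
    have hct : ∀ k, c ≤ t k := by
      intro k
      refine le_trans ?_ (hFl k)
      exact min_le_min le_rfl (by gcongr; exact iInf_le _ k)
    have hsum : ∀ n : ℕ, (n : ℝ≥0∞) * c ≤ μ E := by
      intro n
      calc (n : ℝ≥0∞) * c = ∑ _i ∈ Finset.range n, c := by
            rw [Finset.sum_const, Finset.card_range, nsmul_eq_mul]
        _ ≤ ∑ i ∈ Finset.range n, t i := Finset.sum_le_sum fun i _ => hct i
        _ ≤ μ E := le_add_self.trans_eq (hpartial n)
    obtain ⟨n, hn⟩ := ENNReal.exists_nat_gt (ENNReal.div_lt_top hfin.ne hcpos.ne').ne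
    have : μ E < (n : ℝ≥0∞) * c := by
      rw [← ENNReal.div_lt_iff (Or.inl hcpos.ne') (Or.inl hcfin)]
      exact hn
    exact absurd (hsum n) (not_le.2 this)
  -- conclude
  refine ⟨ℓ, F, hFm, fun k => (hFR k).trans (hRE' k), hdisj, hFv, ?_⟩
  have hps : ∀ n, ∑ i ∈ Finset.range n, t i = μ E - μ (Rs n).1 := by
    intro n
    have := hpartial n
    exact (ENNReal.sub_eq_of_eq_add (hRfin n).ne (by rw [← this, add_comm])).symm
  calc (∑' k, ((2 : ℝ≥0∞) ^ ℓ k)⁻¹) = ⨆ n, ∑ i ∈ Finset.range n, t i :=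
        ENNReal.tsum_eq_iSup_nat
    _ = ⨆ n, (μ E - μ (Rs n).1) := by simp only [hps]
    _ = μ E - ⨅ n, μ (Rs n).1 := (ENNReal.sub_iInf).symm
    _ = μ E := by rw [hinf, tsub_zero]
end

section
/- Let T and S be positive semi-definite bounded operators on a Hilbert space H, K a closed subspace with projections P = P_K and Q = P_{K⊥}, and suppose: (i) ‖T‖ ≤ 1 and ‖S‖ ≤ 2; (ii) tr(P S P) ≤ γ ≤ 1 and tr(P T P) ≤ γ; (iii) −ε Q ≤ Q(S − T)Q ≤ ε Q. Then −ε Q − 4√γ I ≤ S − T ≤ ε Q + 4√γ I. -/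
open ContinuousLinearMap
open scoped ComplexInnerProductSpace

private lemma sqrt_inner_factor {H : Type*} [NormedAddCommGroup H] [InnerProductSpace ℂ H]
    [CompleteSpace H] {B : H →L[ℂ] H} (hB : B.IsPositive) :
    ∃ C : H →L[ℂ] H, IsSelfAdjoint C ∧ ∀ u v : H, ⟪B u, v⟫ = ⟪C u, C v⟫ := by
  have h0 : (0 : H →L[ℂ] H) ≤ B := (B.nonneg_iff_isPositive).mpr hB
  have hsa : IsSelfAdjoint (CFC.sqrt B) := IsSelfAdjoint.of_nonneg (CFC.sqrt_nonneg B)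
  refine ⟨CFC.sqrt B, hsa, fun u v => ?_⟩
  have hsq : CFC.sqrt B * CFC.sqrt B = B := CFC.sqrt_mul_sqrt_self B h0
  conv_lhs => rw [← hsq]
  exact (isSelfAdjoint_iff_isSymmetric.mp hsa) (CFC.sqrt B u) v

private lemma trace_quad_bound {H : Type*} [NormedAddCommGroup H] [InnerProductSpace ℂ H]
    [CompleteSpace H] {B : H →L[ℂ] H} (hB : B.IsPositive)
    (e : HilbertBasis ℕ ℂ H) {s γ : ℝ} (hγ : s ≤ γ)
    (hs : HasSum (fun i => (⟪B (e i), e i⟫).re) s) (x : H) :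
    (⟪B x, x⟫).re ≤ γ * ‖x‖ ^ 2 := by
  obtain ⟨C, hCsa, hC⟩ := sqrt_inner_factor hB
  have hsym := isSelfAdjoint_iff_isSymmetric.mp hCsa
  have key : ∀ u : H, (⟪B u, u⟫).re = ‖C u‖ ^ 2 := by
    intro u
    rw [hC]
    simpa using inner_self_eq_norm_sq (𝕜 := ℂ) (C u)
  have h1 : HasSum (fun i => (⟪C x, e i⟫ * ⟪e i, C x⟫).re) (‖C x‖ ^ 2) := by
    have h := (e.hasSum_inner_mul_inner (C x) (C x)).mapL Complex.reCLM
    have h2 : (⟪C x, C x⟫).re = ‖C x‖ ^ 2 := by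
      simpa using inner_self_eq_norm_sq (𝕜 := ℂ) (C x)
    simpa [h2, ← Complex.ofReal_pow] using h
  have h2 : HasSum (fun i => (⟪B (e i), e i⟫).re * ‖x‖ ^ 2) (s * ‖x‖ ^ 2) := hs.mul_right _
  have hsym' : ∀ u v : H, ⟪C u, v⟫ = ⟪u, C v⟫ := fun u v => hsym u v
  have hle : ∀ i, (⟪C x, e i⟫ * ⟪e i, C x⟫).re ≤ (⟪B (e i), e i⟫).re * ‖x‖ ^ 2 := by
    intro i
    have hnn : ‖⟪C x, e i⟫‖ = ‖⟪C (e i), x⟫‖ := by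
      rw [hsym' (e i) x]
      exact norm_inner_symm _ _
    have h5 : (⟪C x, e i⟫ * ⟪e i, C x⟫).re = ‖⟪C (e i), x⟫‖ ^ 2 := by
      rw [← inner_conj_symm (e i) (C x), Complex.mul_conj', ← hnn]
      norm_cast
    rw [h5, key (e i)]
    nlinarith [norm_inner_le_norm (𝕜 := ℂ) (C (e i)) x, norm_nonneg (⟪C (e i), x⟫ : ℂ),
      norm_nonneg (C (e i)), norm_nonneg x]
  have hfinal : ‖C x‖ ^ 2 ≤ s * ‖x‖ ^ 2 := hasSum_le hle h1 h2
  rw [key x]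
  nlinarith [sq_nonneg ‖x‖]

set_option maxHeartbeats 1000000 in
/-- If `T, S ≥ 0`, `‖T‖ ≤ 1`, `‖S‖ ≤ 2`, the compressions to a closed subspace `K` have traces
`tr(PSP), tr(PTP) ≤ γ ≤ 1`, and `−εQ ≤ Q(S−T)Q ≤ εQ` on `K⊥`, then
`−εQ − 4√γ I ≤ S − T ≤ εQ + 4√γ I`. -/
theorem stmt18 {H : Type*} [NormedAddCommGroup H] [InnerProductSpace ℂ H] [CompleteSpace H]
    (T S : H →L[ℂ] H) (hT : T.IsPositive) (hS : S.IsPositive)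
    (hTn : ‖T‖ ≤ 1) (hSn : ‖S‖ ≤ 2)
    (K : Submodule ℂ H) [CompleteSpace K]
    (P Q : H →L[ℂ] H)
    (hP : P = K.subtypeL.comp (Submodule.orthogonalProjection K))
    (hQ : Q = Kᗮ.subtypeL.comp (Submodule.orthogonalProjection Kᗮ))
    (γ ε : ℝ) (hγ0 : 0 ≤ γ) (hγ1 : γ ≤ 1)
    (e : HilbertBasis ℕ ℂ H)
    (htrS : ∃ s ≤ γ, HasSum (fun i => (⟪(P.comp (S.comp P)) (e i), e i⟫).re) s)
    (htrT : ∃ s ≤ γ, HasSum (fun i => (⟪(P.comp (T.comp P)) (e i), e i⟫).re) s)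
    (hQu : ((ε • Q) - Q.comp ((S - T).comp Q)).IsPositive)
    (hQl : (Q.comp ((S - T).comp Q) + ε • Q).IsPositive) :
    ((ε • Q + (4 * Real.sqrt γ) • (1 : H →L[ℂ] H)) - (S - T)).IsPositive ∧
    ((S - T) + (ε • Q + (4 * Real.sqrt γ) • (1 : H →L[ℂ] H))).IsPositive := by
  have hPsa : IsSelfAdjoint P := by
    rw [hP]; exact isSelfAdjoint_starProjection K
  have hQsa : IsSelfAdjoint Q := by
    rw [hQ]; exact isSelfAdjoint_starProjection Kᗮ
  have hA : IsSelfAdjoint (S - T) := hS.isSelfAdjoint.sub hT.isSelfAdjoint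
  have hPsym : ∀ u v : H, ⟪P u, v⟫ = ⟪u, P v⟫ :=
    fun u v => (isSelfAdjoint_iff_isSymmetric.mp hPsa) u v
  have hQsym : ∀ u v : H, ⟪Q u, v⟫ = ⟪u, Q v⟫ :=
    fun u v => (isSelfAdjoint_iff_isSymmetric.mp hQsa) u v
  have hAsym : ∀ u v : H, ⟪(S - T) u, v⟫ = ⟪u, (S - T) v⟫ :=
    fun u v => (isSelfAdjoint_iff_isSymmetric.mp hA) u v
  -- compressions are positive
  have hPSP : (P.comp (S.comp P)).IsPositive := by
    have h := hS.conj_adjoint P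
    rwa [hPsa.adjoint_eq] at h
  have hPTP : (P.comp (T.comp P)).IsPositive := by
    have h := hT.conj_adjoint P
    rwa [hPsa.adjoint_eq] at h
  obtain ⟨sS, hsS, htrS'⟩ := htrS
  obtain ⟨sT, hsT, htrT'⟩ := htrT
  have hSbound : ∀ y : H, (⟪(P.comp (S.comp P)) y, y⟫).re ≤ γ * ‖y‖ ^ 2 :=
    fun y => trace_quad_bound hPSP e hsS htrS' y
  have hTbound : ∀ y : H, (⟪(P.comp (T.comp P)) y, y⟫).re ≤ γ * ‖y‖ ^ 2 :=
    fun y => trace_quad_bound hPTP e hsT htrT' y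
  obtain ⟨Cs, hCssa, hCs⟩ := sqrt_inner_factor hS
  obtain ⟨Ct, hCtsa, hCt⟩ := sqrt_inner_factor hT
  -- basic projection facts
  have hxpq : ∀ x : H, P x + Q x = x := by
    intro x
    rw [hP, hQ]
    simpa using (eq_sum_orthogonalProjection_self_orthogonalComplement K x).symm
  have hpK : ∀ x : H, P x ∈ K := by
    intro x; rw [hP]; exact (Submodule.orthogonalProjection K x).2
  have hqK : ∀ x : H, Q x ∈ Kᗮ := by
    intro x; rw [hQ]; exact (Submodule.orthogonalProjection Kᗮ x).2
  have hPfix : ∀ y : H, y ∈ K → P y = y := by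
    intro y hy; rw [hP]
    exact K.starProjection_eq_self_iff.mpr hy
  have hQfix : ∀ y : H, y ∈ Kᗮ → Q y = y := by
    intro y hy; rw [hQ]
    exact Kᗮ.starProjection_eq_self_iff.mpr hy
  have hpq0 : ∀ x : H, ⟪P x, Q x⟫ = 0 := by
    intro x
    exact (Submodule.mem_orthogonal K (Q x)).mp (hqK x) (P x) (hpK x)
  have hQinner : ∀ x : H, (⟪Q x, x⟫).re = ‖Q x‖ ^ 2 := by
    intro x
    have hQQ : Q (Q x) = Q x := hQfix (Q x) (hqK x)
    have : ⟪Q x, x⟫ = ⟪Q x, Q x⟫ := by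
      calc ⟪Q x, x⟫ = ⟪Q (Q x), x⟫ := by rw [hQQ]
        _ = ⟪Q x, Q x⟫ := hQsym (Q x) x
    rw [this]
    simpa using inner_self_eq_norm_sq (𝕜 := ℂ) (Q x)
  -- sqrt identities
  have hCsq_eq : ∀ y : H, (⟪S y, y⟫).re = ‖Cs y‖ ^ 2 := by
    intro y; rw [hCs]
    simpa using inner_self_eq_norm_sq (𝕜 := ℂ) (Cs y)
  have hCtq_eq : ∀ y : H, (⟪T y, y⟫).re = ‖Ct y‖ ^ 2 := by
    intro y; rw [hCt]
    simpa using inner_self_eq_norm_sq (𝕜 := ℂ) (Ct y)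
  -- quadratic bounds on K
  have hSp : ∀ x : H, ‖Cs (P x)‖ ^ 2 ≤ γ * ‖P x‖ ^ 2 := by
    intro x
    have h := hSbound (P x)
    rw [← hCsq_eq (P x)]
    have heq : (⟪(P.comp (S.comp P)) (P x), P x⟫).re = (⟪S (P x), P x⟫).re := by
      have h1 : (P.comp (S.comp P)) (P x) = P (S (P x)) := by
        simp [ContinuousLinearMap.comp_apply, hPfix (P x) (hpK x)]
      rw [h1, hPsym (S (P x)) (P x), hPfix (P x) (hpK x)]
    rw [← heq]; exact h
  have hTp : ∀ x : H, ‖Ct (P x)‖ ^ 2 ≤ γ * ‖P x‖ ^ 2 := by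
    intro x
    have h := hTbound (P x)
    rw [← hCtq_eq (P x)]
    have heq : (⟪(P.comp (T.comp P)) (P x), P x⟫).re = (⟪T (P x), P x⟫).re := by
      have h1 : (P.comp (T.comp P)) (P x) = P (T (P x)) := by
        simp [ContinuousLinearMap.comp_apply, hPfix (P x) (hpK x)]
      rw [h1, hPsym (T (P x)) (P x), hPfix (P x) (hpK x)]
    rw [← heq]; exact h
  -- norm bounds on all of H
  have hSq : ∀ y : H, ‖Cs y‖ ^ 2 ≤ 2 * ‖y‖ ^ 2 := by
    intro y
    rw [← hCsq_eq y]
    have h1 : (⟪S y, y⟫).re ≤ ‖S y‖ * ‖y‖ := by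
      calc (⟪S y, y⟫).re ≤ ‖⟪S y, y⟫‖ := Complex.re_le_norm _
        _ ≤ ‖S y‖ * ‖y‖ := norm_inner_le_norm _ _
    have h2 : ‖S y‖ ≤ ‖S‖ * ‖y‖ := S.le_opNorm y
    nlinarith [norm_nonneg y, norm_nonneg (S y), norm_nonneg S]
  have hTq : ∀ y : H, ‖Ct y‖ ^ 2 ≤ ‖y‖ ^ 2 := by
    intro y
    rw [← hCtq_eq y]
    have h1 : (⟪T y, y⟫).re ≤ ‖T y‖ * ‖y‖ := by
      calc (⟪T y, y⟫).re ≤ ‖⟪T y, y⟫‖ := Complex.re_le_norm _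
        _ ≤ ‖T y‖ * ‖y‖ := norm_inner_le_norm _ _
    have h2 : ‖T y‖ ≤ ‖T‖ * ‖y‖ := T.le_opNorm y
    nlinarith [norm_nonneg y, norm_nonneg (T y), norm_nonneg T]
  -- main pointwise estimate
  have main : ∀ x : H,
      |(⟪(S - T) x, x⟫).re - (⟪(S - T) (Q x), Q x⟫).re| ≤ 4 * Real.sqrt γ * ‖x‖ ^ 2 := by
    intro x
    set p := P x with hp
    set q := Q x with hq'
    have hx : p + q = x := hxpq x
    have hpq : ⟪p, q⟫ = 0 := hpq0 x
    have hqp : ⟪q, p⟫ = 0 := by rw [← inner_conj_symm, hpq]; simp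
    have hnx : ‖x‖ ^ 2 = ‖p‖ ^ 2 + ‖q‖ ^ 2 := by
      rw [← hx, @norm_add_sq ℂ]
      simp [hpq]
    have hSpP : ‖Cs p‖ ^ 2 ≤ γ * ‖p‖ ^ 2 := hSp x
    have hTpP : ‖Ct p‖ ^ 2 ≤ γ * ‖p‖ ^ 2 := hTp x
    -- decomposition of the quadratic form
    have hdec : (⟪(S - T) x, x⟫).re
        = (⟪(S - T) p, p⟫).re + (⟪(S - T) q, q⟫).re + 2 * (⟪(S - T) p, q⟫).re := by
      conv_lhs => rw [← hx]
      rw [map_add, inner_add_left, inner_add_right, inner_add_right]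
      have h2 : (⟪(S - T) q, p⟫).re = (⟪(S - T) p, q⟫).re := by
        rw [hAsym q p]
        have h3 := congrArg Complex.re (inner_conj_symm ((S - T) p) q)
        rw [Complex.conj_re] at h3
        exact h3
      simp only [Complex.add_re]
      rw [h2]
      ring
    -- bounds
    set g := Real.sqrt γ with hg
    have hg0 : 0 ≤ g := Real.sqrt_nonneg γ
    have hg2 : g ^ 2 = γ := Real.sq_sqrt hγ0
    have hg1 : g ≤ 1 := Real.sqrt_le_one.mpr hγ1
    have s2 : Real.sqrt 2 ≤ 2 := by
      nlinarith [Real.sq_sqrt (by norm_num : (0:ℝ) ≤ 2), Real.sqrt_nonneg 2]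
    have s20 : 0 ≤ Real.sqrt 2 := Real.sqrt_nonneg 2
    have s22 : Real.sqrt 2 ^ 2 = 2 := Real.sq_sqrt (by norm_num)
    have ha : 0 ≤ ‖p‖ := norm_nonneg p
    have hb : 0 ≤ ‖q‖ := norm_nonneg q
    -- App
    have hSpp : (⟪S p, p⟫).re ≤ γ * ‖p‖ ^ 2 := by rw [hCsq_eq]; exact hSpP
    have hTpp : (⟪T p, p⟫).re ≤ γ * ‖p‖ ^ 2 := by rw [hCtq_eq]; exact hTpP
    have hSpp0 : 0 ≤ (⟪S p, p⟫).re := by rw [hCsq_eq]; positivity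
    have hTpp0 : 0 ≤ (⟪T p, p⟫).re := by rw [hCtq_eq]; positivity
    have hApp : (⟪(S - T) p, p⟫).re = (⟪S p, p⟫).re - (⟪T p, p⟫).re := by
      simp [ContinuousLinearMap.sub_apply, inner_sub_left]
    -- cross terms
    have hCsp : ‖Cs p‖ ≤ g * ‖p‖ := by
      calc ‖Cs p‖ = Real.sqrt (‖Cs p‖ ^ 2) := (Real.sqrt_sq (norm_nonneg _)).symm
        _ ≤ Real.sqrt (γ * ‖p‖ ^ 2) := Real.sqrt_le_sqrt hSpP
        _ = g * ‖p‖ := by rw [Real.sqrt_mul hγ0, Real.sqrt_sq (norm_nonneg _)]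
    have hCtp : ‖Ct p‖ ≤ g * ‖p‖ := by
      calc ‖Ct p‖ = Real.sqrt (‖Ct p‖ ^ 2) := (Real.sqrt_sq (norm_nonneg _)).symm
        _ ≤ Real.sqrt (γ * ‖p‖ ^ 2) := Real.sqrt_le_sqrt hTpP
        _ = g * ‖p‖ := by rw [Real.sqrt_mul hγ0, Real.sqrt_sq (norm_nonneg _)]
    have hCsq2 : ‖Cs q‖ ≤ Real.sqrt 2 * ‖q‖ := by
      calc ‖Cs q‖ = Real.sqrt (‖Cs q‖ ^ 2) := (Real.sqrt_sq (norm_nonneg _)).symm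
        _ ≤ Real.sqrt (2 * ‖q‖ ^ 2) := Real.sqrt_le_sqrt (hSq q)
        _ = Real.sqrt 2 * ‖q‖ := by
            rw [Real.sqrt_mul (by norm_num : (0:ℝ) ≤ 2), Real.sqrt_sq (norm_nonneg _)]
    have hCtq2 : ‖Ct q‖ ≤ ‖q‖ := by
      calc ‖Ct q‖ = Real.sqrt (‖Ct q‖ ^ 2) := (Real.sqrt_sq (norm_nonneg _)).symm
        _ ≤ Real.sqrt (‖q‖ ^ 2) := Real.sqrt_le_sqrt (hTq q)
        _ = ‖q‖ := Real.sqrt_sq (norm_nonneg _)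
    have hScross : |(⟪S p, q⟫).re| ≤ (g * ‖p‖) * (Real.sqrt 2 * ‖q‖) := by
      have h1 : |(⟪S p, q⟫).re| ≤ ‖Cs p‖ * ‖Cs q‖ := by
        rw [hCs]
        calc |(⟪Cs p, Cs q⟫).re| ≤ ‖⟪Cs p, Cs q⟫‖ := Complex.abs_re_le_norm _
          _ ≤ ‖Cs p‖ * ‖Cs q‖ := norm_inner_le_norm _ _
      calc |(⟪S p, q⟫).re| ≤ ‖Cs p‖ * ‖Cs q‖ := h1
        _ ≤ (g * ‖p‖) * (Real.sqrt 2 * ‖q‖) := by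
            apply mul_le_mul hCsp hCsq2 (norm_nonneg _) (mul_nonneg hg0 ha)
    have hTcross : |(⟪T p, q⟫).re| ≤ (g * ‖p‖) * ‖q‖ := by
      have h1 : |(⟪T p, q⟫).re| ≤ ‖Ct p‖ * ‖Ct q‖ := by
        rw [hCt]
        calc |(⟪Ct p, Ct q⟫).re| ≤ ‖⟪Ct p, Ct q⟫‖ := Complex.abs_re_le_norm _
          _ ≤ ‖Ct p‖ * ‖Ct q‖ := norm_inner_le_norm _ _
      calc |(⟪T p, q⟫).re| ≤ ‖Ct p‖ * ‖Ct q‖ := h1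
        _ ≤ (g * ‖p‖) * ‖q‖ := by
            apply mul_le_mul hCtp hCtq2 (norm_nonneg _) (mul_nonneg hg0 ha)
    have hAcross : (⟪(S - T) p, q⟫).re = (⟪S p, q⟫).re - (⟪T p, q⟫).re := by
      simp [ContinuousLinearMap.sub_apply, inner_sub_left]
    -- assemble
    have h2ab : g * (2 * (‖p‖ * ‖q‖)) ≤ g * (‖p‖ ^ 2 + ‖q‖ ^ 2) := by
      apply mul_le_mul_of_nonneg_left _ hg0
      nlinarith [sq_nonneg (‖p‖ - ‖q‖)]
    have hγg : γ ≤ g := by nlinarith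
    have f2 : γ * ‖p‖ ^ 2 ≤ g * ‖p‖ ^ 2 := mul_le_mul_of_nonneg_right hγg (sq_nonneg _)
    have f3 : (g * ‖p‖) * (Real.sqrt 2 * ‖q‖) ≤ (3 / 2) * (g * (‖p‖ * ‖q‖)) := by
      have s2' : Real.sqrt 2 ≤ 3 / 2 := by
        nlinarith [Real.sq_sqrt (by norm_num : (0:ℝ) ≤ 2), Real.sqrt_nonneg 2]
      nlinarith [mul_nonneg hg0 (mul_nonneg ha hb)]
    have f4 : (g * ‖p‖) * ‖q‖ = g * (‖p‖ * ‖q‖) := by ring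
    have fgb : 0 ≤ g * ‖q‖ ^ 2 := mul_nonneg hg0 (sq_nonneg _)
    have fga : 0 ≤ g * ‖p‖ ^ 2 := mul_nonneg hg0 (sq_nonneg _)
    obtain ⟨hS1, hS2⟩ := abs_le.mp hScross
    obtain ⟨hT1, hT2⟩ := abs_le.mp hTcross
    rw [hdec, abs_le]
    constructor <;>
    · rw [hApp, hAcross, hnx]
      rw [f4] at hT1 hT2
      linarith [hS1, hS2, hT1, hT2, f3, h2ab, f2, fgb, fga, hSpp, hTpp, hSpp0, hTpp0]
  -- bounds on the Q-compression
  have hQAQu : ∀ x : H, (⟪(S - T) (Q x), Q x⟫).re ≤ ε * ‖Q x‖ ^ 2 := by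
    intro x
    have h := (Complex.nonneg_iff.mp (hQu.inner_nonneg_left x)).1
    have hexp : ((ε • Q - Q.comp ((S - T).comp Q)) x) = ε • Q x - Q ((S - T) (Q x)) := by
      simp [ContinuousLinearMap.sub_apply, ContinuousLinearMap.comp_apply]
    rw [hexp] at h
    simp only [inner_sub_left, inner_smul_real_left] at h
    have h2 : ⟪Q ((S - T) (Q x)), x⟫ = ⟪(S - T) (Q x), Q x⟫ := hQsym _ x
    rw [h2] at h
    have h3 := hQinner x
    simp only [map_sub, RCLike.re_to_complex, Complex.sub_re] at h
    have h4 : (⟪(ε : ℝ) • (Q x), x⟫).re = ε * (⟪Q x, x⟫).re := by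
      rw [← algebraMap_smul ℂ ε (Q x), Complex.coe_algebraMap, inner_smul_left,
        Complex.conj_ofReal, Complex.re_ofReal_mul]
    rw [h4, h3] at h
    linarith
  have hQAQl : ∀ x : H, -(ε * ‖Q x‖ ^ 2) ≤ (⟪(S - T) (Q x), Q x⟫).re := by
    intro x
    have h := (Complex.nonneg_iff.mp (hQl.inner_nonneg_left x)).1
    have hexp : ((Q.comp ((S - T).comp Q) + ε • Q) x) = Q ((S - T) (Q x)) + ε • Q x := by
      simp [ContinuousLinearMap.add_apply, ContinuousLinearMap.comp_apply]
    rw [hexp] at h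
    simp only [inner_add_left, inner_smul_real_left] at h
    have h2 : ⟪Q ((S - T) (Q x)), x⟫ = ⟪(S - T) (Q x), Q x⟫ := hQsym _ x
    rw [h2] at h
    have h3 := hQinner x
    simp only [map_add, RCLike.re_to_complex, Complex.add_re] at h
    have h4 : (⟪(ε : ℝ) • (Q x), x⟫).re = ε * (⟪Q x, x⟫).re := by
      rw [← algebraMap_smul ℂ ε (Q x), Complex.coe_algebraMap, inner_smul_left,
        Complex.conj_ofReal, Complex.re_ofReal_mul]
    rw [h4, h3] at h
    linarith
  -- selfadjointness of the conclusion operators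
  have hc0 : (0:ℝ) ≤ 4 * Real.sqrt γ := by positivity
  have hsa1 : IsSelfAdjoint (ε • Q + (4 * Real.sqrt γ) • (1 : H →L[ℂ] H)) := by
    exact (IsSelfAdjoint.smul (star_trivial ε) hQsa).add
      (IsSelfAdjoint.smul (star_trivial (4 * Real.sqrt γ)) (IsSelfAdjoint.one (R := H →L[ℂ] H)))
  constructor
  · refine ⟨(hsa1.sub hA).isSymmetric, fun x => ?_⟩
    rw [ContinuousLinearMap.reApplyInnerSelf_apply]
    have hexp : ((ε • Q + (4 * Real.sqrt γ) • (1 : H →L[ℂ] H)) - (S - T)) x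
        = ε • Q x + (4 * Real.sqrt γ) • x - (S - T) x := by
      simp [ContinuousLinearMap.sub_apply, ContinuousLinearMap.add_apply]
    rw [hexp]
    simp only [inner_sub_left, inner_add_left, inner_smul_real_left, map_sub, map_add,
      RCLike.re_to_complex, Complex.sub_re, Complex.add_re]
    have h4 : (⟪(ε : ℝ) • (Q x), x⟫).re = ε * (⟪Q x, x⟫).re := by
      rw [← algebraMap_smul ℂ ε (Q x), Complex.coe_algebraMap, inner_smul_left,
        Complex.conj_ofReal, Complex.re_ofReal_mul]
    have hx2 : (⟪x, x⟫).re = ‖x‖ ^ 2 := by simpa using inner_self_eq_norm_sq (𝕜 := ℂ) x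
    have h5 : (⟪((4 * Real.sqrt γ : ℝ)) • x, x⟫).re = (4 * Real.sqrt γ) * ‖x‖ ^ 2 := by
      rw [← algebraMap_smul ℂ (4 * Real.sqrt γ) x, Complex.coe_algebraMap, inner_smul_left,
        Complex.conj_ofReal, Complex.re_ofReal_mul, hx2]
    rw [h4, h5, hQinner x]
    have hm := abs_le.mp (main x)
    have hq := hQAQu x
    linarith [hm.2]
  · refine ⟨(hA.add hsa1).isSymmetric, fun x => ?_⟩
    rw [ContinuousLinearMap.reApplyInnerSelf_apply]
    have hexp : ((S - T) + (ε • Q + (4 * Real.sqrt γ) • (1 : H →L[ℂ] H))) x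
        = (S - T) x + (ε • Q x + (4 * Real.sqrt γ) • x) := by
      simp [ContinuousLinearMap.add_apply]
    rw [hexp]
    simp only [inner_add_left, inner_smul_real_left, map_add, RCLike.re_to_complex,
      Complex.add_re]
    have h4 : (⟪(ε : ℝ) • (Q x), x⟫).re = ε * (⟪Q x, x⟫).re := by
      rw [← algebraMap_smul ℂ ε (Q x), Complex.coe_algebraMap, inner_smul_left,
        Complex.conj_ofReal, Complex.re_ofReal_mul]
    have hx2 : (⟪x, x⟫).re = ‖x‖ ^ 2 := by simpa using inner_self_eq_norm_sq (𝕜 := ℂ) x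
    have h5 : (⟪((4 * Real.sqrt γ : ℝ)) • x, x⟫).re = (4 * Real.sqrt γ) * ‖x‖ ^ 2 := by
      rw [← algebraMap_smul ℂ (4 * Real.sqrt γ) x, Complex.coe_algebraMap, inner_smul_left,
        Complex.conj_ofReal, Complex.re_ofReal_mul, hx2]
    rw [h4, h5, hQinner x]
    have hm := abs_le.mp (main x)
    have hq := hQAQl x
    linarith [hm.1]
end
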